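/- If M_f is a stable half-integral matching and one rounds it to an integral matching by, for each doctor node, keeping only the edge of positive weight that the doctor most prefers (if any), then every node of the graph gains at most one unit relative to its fractional degree: for every node v, the number of matched edges at v in the rounded matching is at most the fractional total weight at v plus 1. -/

import Mathlib

/-- Rounding a stable half-integral matching by keeping, for each doctor,
its most-preferred positive-weight edge, increases each node's degree by at most one
relative to its fractional total weight. -/
theorem stmt_1 {Doc Hos : Type} [Fintype Doc] [Fintype Hos] [DecidableEq Doc] [DecidableEq Hos]
    (acc : Doc → Hos → Prop)
    (q : Hos → ℚ)
    (w : Doc → Hos → ℚ)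
    (rD : Doc → Hos → ℕ) (rH : Hos → Doc → ℕ)
    -- weight only on acceptable pairs
    (hacc : ∀ d h, ¬ acc d h → w d h = 0)
    -- half-integral values
    (hvals : ∀ d h, w d h = 0 ∨ w d h = 1/2 ∨ w d h = 1)
    -- doctors have capacity 1, hospitals capacity q
    (hcapD : ∀ d, ∑ h, w d h ≤ 1)
    (hcapH : ∀ h, ∑ d, w d h ≤ q h)
    -- strict preferences
    (hstrictD : ∀ d h h', rD d h = rD d h' → h = h')
    (hstrictH : ∀ h d d', rH h d = rH h d' → d = d')
    -- stability: every acceptable edge of weight < 1 is dominated at an endpoint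
    (hstable : ∀ d h, acc d h → w d h < 1 →
        ((∑ h', w d h' = 1) ∧ ∀ h', 0 < w d h' → rD d h' ≤ rD d h) ∨
        ((∑ d', w d' h = q h) ∧ ∀ d', 0 < w d' h → rH h d' ≤ rH h d))
    -- the rounded matching: each doctor keeps its most preferred positive-weight edge
    (M : Doc → Option Hos)
    (hM : ∀ d h, M d = some h ↔ (0 < w d h ∧ ∀ h', 0 < w d h' → rD d h ≤ rD d h')) :
    (∀ h : Hos, ((Finset.univ.filter (fun d => M d = some h)).card : ℚ) ≤ (∑ d, w d h) + 1)
    ∧ (∀ d : Doc, ((Finset.univ.filter (fun h => M d = some h)).card : ℚ) ≤ (∑ h, w d h) + 1) := by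
  classical
  have hw0 : ∀ d h, (0:ℚ) ≤ w d h := by
    intro d h; rcases hvals d h with h1 | h1 | h1 <;> rw [h1] <;> norm_num
  constructor
  · intro h
    set S := Finset.univ.filter (fun d => M d = some h) with hSdef
    have hmem : ∀ d ∈ S, 0 < w d h ∧ ∀ h', 0 < w d h' → rD d h ≤ rD d h' := by
      intro d hd
      rw [hSdef, Finset.mem_filter] at hd
      exact (hM d h).1 hd.2
    set Sh := S.filter (fun d => w d h = 1/2) with hShdef
    set S1 := S.filter (fun d => w d h = 1) with hS1def
    -- every matched doctor with half weight is hospital-side dominated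
    have hdom : ∀ d ∈ Sh, ∀ d', 0 < w d' h → rH h d' ≤ rH h d := by
      intro d hd
      rw [hShdef, Finset.mem_filter] at hd
      obtain ⟨hdS, hhalf⟩ := hd
      obtain ⟨hpos, hbest⟩ := hmem d hdS
      have haccdh : acc d h := by
        by_contra hc
        have := hacc d h hc
        rw [this] at hpos; exact lt_irrefl 0 hpos
      have hlt : w d h < 1 := by rw [hhalf]; norm_num
      rcases hstable d h haccdh hlt with ⟨hsum, hdd⟩ | ⟨_, hh⟩
      · -- doctor side: then h is d's only positive edge, sum = 1/2 ≠ 1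
        exfalso
        have honly : ∀ h' ∈ Finset.univ, h' ≠ h → w d h' = 0 := by
          intro h' _ hne
          by_contra hc
          have hpos' : 0 < w d h' := lt_of_le_of_ne (hw0 d h') (Ne.symm hc)
          have h1 := hbest h' hpos'
          have h2 := hdd h' hpos'
          exact hne (hstrictD d h' h (le_antisymm h2 h1))
        have : ∑ h', w d h' = w d h :=
          Finset.sum_eq_single_of_mem h (Finset.mem_univ h) honly
        rw [this, hhalf] at hsum
        norm_num at hsum
      · exact hh
    have hShcard : Sh.card ≤ 1 := by
      apply Finset.card_le_one.2
      intro a ha b hb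
      have hwa : 0 < w a h := by
        rw [hShdef, Finset.mem_filter] at ha; rw [ha.2]; norm_num
      have hwb : 0 < w b h := by
        rw [hShdef, Finset.mem_filter] at hb; rw [hb.2]; norm_num
      exact hstrictH h a b (le_antisymm (hdom b hb a hwa) (hdom a ha b hwb))
    have hS1eq : S.filter (fun d => ¬ (w d h = 1/2)) = S1 := by
      rw [hS1def]
      apply Finset.filter_congr
      intro d hd
      rcases hvals d h with h1 | h1 | h1
      · exact absurd h1 (ne_of_gt (hmem d hd).1)
      · simp [h1]
      · simp [h1]
    have hcardsplit : Sh.card + S1.card = S.card := by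
      rw [← hS1eq, hShdef]
      exact Finset.card_filter_add_card_filter_not _
    -- sum bound: ∑ d, w d h ≥ S1.card
    have hsub : S1 ⊆ Finset.univ := Finset.subset_univ _
    have h1 : (S1.card : ℚ) = ∑ d ∈ S1, w d h := by
      rw [Finset.sum_congr rfl (fun d hd => (Finset.mem_filter.1 hd).2)]
      simp [hS1def]
    have h2 : ∑ d ∈ S1, w d h ≤ ∑ d, w d h :=
      Finset.sum_le_sum_of_subset_of_nonneg hsub (fun d _ _ => hw0 d h)
    have h3 : (S.card : ℚ) ≤ (S1.card : ℚ) + 1 := by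
      have : S.card ≤ S1.card + 1 := by omega
      exact_mod_cast this
    linarith
  · intro d
    have hc1 : (Finset.univ.filter (fun h => M d = some h)).card ≤ 1 := by
      apply Finset.card_le_one.2
      intro a ha b hb
      rw [Finset.mem_filter] at ha hb
      have := ha.2.symm.trans hb.2
      exact Option.some_injective _ this
    have hs0 : (0:ℚ) ≤ ∑ h, w d h := Finset.sum_nonneg fun h _ => hw0 d h
    calc ((Finset.univ.filter (fun h => M d = some h)).card : ℚ) ≤ 1 := by exact_mod_cast hc1
      _ ≤ (∑ h, w d h) + 1 := by linarith
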